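/- (Claim 4) Let k ≥ 1, n ≥ 2 be integers and let A ⊆ [k]^n be a compressed set. Then A is a down-set, and moreover d(A) is also a down-set. -/
import Mathlib


open Finset
open scoped Classical

/-- `R_i(x)`: the set of coordinates of `x` equal to `i`.
The ambient alphabet is `[k+1] = {0,…,k}`. -/
noncomputable def rset {k N : ℕ} (x : Fin N → Fin (k + 1)) (i : ℕ) : Finset (Fin N) :=
  Finset.univ.filter fun j => (x j : ℕ) = i

/-- the strict binary order on finite sets of coordinates:
`X <_bin Y` iff `X ≠ Y` and `max (X Δ Y) ∈ Y`. -/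
def binLT {N : ℕ} (X Y : Finset (Fin N)) : Prop :=
  ∃ m ∈ Y, m ∉ X ∧ ∀ j : Fin N, ((j ∈ X ∧ j ∉ Y) ∨ (j ∈ Y ∧ j ∉ X)) → j ≤ m

/-- the strict `≤`-order on `[k+1]^N`: `x < y` iff `|R_0(x)| > |R_0(y)|`, or
`|R_0(x)| = |R_0(y)|` and for the largest `i` with `R_i(x) ≠ R_i(y)` we have
`max (R_i(x) Δ R_i(y)) ∈ R_i(y)`. -/
def plt {k N : ℕ} (x y : Fin N → Fin (k + 1)) : Prop :=
  (rset y 0).card < (rset x 0).card ∨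
    ((rset x 0).card = (rset y 0).card ∧
      ∃ i : ℕ, binLT (rset x i) (rset y i) ∧ ∀ j : ℕ, i < j → rset x j = rset y j)

/-- the `≤`-order on `[k+1]^N`. -/
def ple {k N : ℕ} (x y : Fin N → Fin (k + 1)) : Prop := x = y ∨ plt x y

/-- `B` is an initial segment of the `≤`-order. -/
def isInitSeg {k N : ℕ} (B : Finset (Fin N → Fin (k + 1))) : Prop :=
  ∀ y ∈ B, ∀ x, ple x y → x ∈ B

/-- the `d`-shadow: all points obtained from a point of `A` by flipping one
nonzero coordinate to `0`. -/
noncomputable def dShadow {k N : ℕ} (A : Finset (Fin N → Fin (k + 1))) :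
    Finset (Fin N → Fin (k + 1)) :=
  A.biUnion fun x =>
    (Finset.univ.filter fun i => x i ≠ 0).image fun i => Function.update x i 0

/-- the initial segment of the `≤`-order on `[k+1]^N` of cardinality `m`. -/
noncomputable def initSeg (k N m : ℕ) : Finset (Fin N → Fin (k + 1)) :=
  Finset.univ.filter fun x => (Finset.univ.filter fun y => ple y x).card ≤ m

/-- the `C_s`-compression of `A ⊆ [k+1]^(n+1)`: replace each slice
`A_{s,t} = {y : t_s y ∈ A}` by the initial segment of the same size. -/
noncomputable def compress {k n : ℕ} (s : Fin (n + 1)) (A : Finset (Fin (n + 1) → Fin (k + 1))) :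
    Finset (Fin (n + 1) → Fin (k + 1)) :=
  Finset.univ.biUnion fun t : Fin (k + 1) =>
    (initSeg k n
        (Finset.univ.filter fun y : Fin n → Fin (k + 1) => s.insertNth t y ∈ A).card).image
      fun y => s.insertNth t y

/-- `A` is compressed if every `C_s`-compression fixes it. -/
def IsCompressed {k n : ℕ} (A : Finset (Fin (n + 1) → Fin (k + 1))) : Prop :=
  ∀ s : Fin (n + 1), compress s A = A

/-- `B_r`: points with exactly `r` zero coordinates. -/
noncomputable def Bexact (k N r : ℕ) : Finset (Fin N → Fin (k + 1)) :=
  Finset.univ.filter fun x => (rset x 0).card = r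

/-- `B_{≥r}`: points with at least `r` zero coordinates. -/
noncomputable def Bge (k N r : ℕ) : Finset (Fin N → Fin (k + 1)) :=
  Finset.univ.filter fun x => r ≤ (rset x 0).card

/-- `m(x)`: the largest coordinate value of `x`. -/
noncomputable def mval {k N : ℕ} (x : Fin N → Fin (k + 1)) : ℕ :=
  Finset.univ.sup fun i => (x i : ℕ)

/-- the class `C_X`: points with maximal coordinate `s`, attained exactly on `X`,
and exactly `r` zero coordinates. -/
noncomputable def classSet (k N s r : ℕ) (X : Finset (Fin N)) : Finset (Fin N → Fin (k + 1)) :=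
  Finset.univ.filter fun x => mval x = s ∧ rset x s = X ∧ (rset x 0).card = r

/-- `[m]^N = {0,…,m−1}^N`. -/
noncomputable def box (k N m : ℕ) : Finset (Fin N → Fin (k + 1)) :=
  Finset.univ.filter fun x => ∀ i, (x i : ℕ) < m

/-- `{1,…,s−1}^N`. -/
noncomputable def box1 (k N s : ℕ) : Finset (Fin N → Fin (k + 1)) :=
  Finset.univ.filter fun x => ∀ i, 1 ≤ (x i : ℕ) ∧ (x i : ℕ) ≤ s - 1

/-- `B` is a down-set. -/
def isDownSet {k N : ℕ} (B : Finset (Fin N → Fin (k + 1))) : Prop :=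
  ∀ y ∈ B, ∀ x : Fin N → Fin (k + 1), (∀ j, (x j : ℕ) ≤ (y j : ℕ)) → x ∈ B

section Aux

lemma binLT_trans {N : ℕ} {X Y Z : Finset (Fin N)} (h1 : binLT X Y) (h2 : binLT Y Z) :
    binLT X Z := by
  obtain ⟨m1, hm1Z : m1 ∈ Y, hm1X, hb1⟩ := h1
  obtain ⟨m2, hm2Z, hm2Y, hb2⟩ := h2
  rcases lt_trichotomy m1 m2 with hlt | heq | hgt
  · refine ⟨m2, hm2Z, ?_, ?_⟩
    · intro hX
      exact absurd (hb1 m2 (Or.inl ⟨hX, hm2Y⟩)) (not_le.2 hlt)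
    · rintro j (⟨hjX, hjZ⟩ | ⟨hjZ, hjX⟩)
      · by_cases hjY : j ∈ Y
        · exact hb2 j (Or.inl ⟨hjY, hjZ⟩)
        · exact le_of_lt (lt_of_le_of_lt (hb1 j (Or.inl ⟨hjX, hjY⟩)) hlt)
      · by_cases hjY : j ∈ Y
        · exact le_of_lt (lt_of_le_of_lt (hb1 j (Or.inr ⟨hjY, hjX⟩)) hlt)
        · exact hb2 j (Or.inr ⟨hjZ, hjY⟩)
  · exact absurd hm1Z (heq ▸ hm2Y)
  · refine ⟨m1, ?_, hm1X, ?_⟩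
    · by_contra hZ
      exact absurd (hb2 m1 (Or.inl ⟨hm1Z, hZ⟩)) (not_le.2 hgt)
    · rintro j (⟨hjX, hjZ⟩ | ⟨hjZ, hjX⟩)
      · by_cases hjY : j ∈ Y
        · exact le_of_lt (lt_of_le_of_lt (hb2 j (Or.inl ⟨hjY, hjZ⟩)) hgt)
        · exact hb1 j (Or.inl ⟨hjX, hjY⟩)
      · by_cases hjY : j ∈ Y
        · exact hb1 j (Or.inr ⟨hjY, hjX⟩)
        · exact le_of_lt (lt_of_le_of_lt (hb2 j (Or.inr ⟨hjZ, hjY⟩)) hgt)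

lemma plt_trans {k N : ℕ} {x y z : Fin N → Fin (k + 1)} (h1 : plt x y) (h2 : plt y z) :
    plt x z := by
  rcases h1 with h1 | ⟨hc1, i1, hb1, hf1⟩
  · rcases h2 with h2 | ⟨hc2, _⟩
    · exact Or.inl (lt_trans h2 h1)
    · exact Or.inl (hc2 ▸ h1)
  · rcases h2 with h2 | ⟨hc2, i2, hb2, hf2⟩
    · exact Or.inl (lt_of_lt_of_le h2 (le_of_eq hc1.symm))
    · refine Or.inr ⟨hc1.trans hc2, ?_⟩
      rcases lt_trichotomy i1 i2 with hlt | heq | hgt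
      · exact ⟨i2, (hf1 i2 hlt) ▸ hb2,
          fun j hj => (hf1 j (lt_trans hlt hj)).trans (hf2 j hj)⟩
      · subst heq
        exact ⟨i1, binLT_trans hb1 hb2, fun j hj => (hf1 j hj).trans (hf2 j hj)⟩
      · exact ⟨i1, (hf2 i1 hgt) ▸ hb1,
          fun j hj => (hf1 j hj).trans (hf2 j (lt_trans hgt hj))⟩

lemma ple_trans {k N : ℕ} {x y z : Fin N → Fin (k + 1)} (h1 : ple x y) (h2 : ple y z) :
    ple x z := by
  rcases h1 with rfl | h1
  · exact h2
  · rcases h2 with rfl | h2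
    · exact Or.inr h1
    · exact Or.inr (plt_trans h1 h2)

lemma rset_eq_empty_of_big {k N : ℕ} (x : Fin N → Fin (k + 1)) {j : ℕ} (hj : k < j) :
    rset x j = ∅ := by
  ext a
  simp only [rset, Finset.mem_filter, Finset.mem_univ, true_and, Finset.notMem_empty,
    iff_false]
  exact fun h => absurd ((x a).isLt) (by omega)

lemma ple_of_le {k N : ℕ} {x y : Fin N → Fin (k + 1)}
    (h : ∀ j, (x j : ℕ) ≤ (y j : ℕ)) : ple x y := by
  by_cases hxy : x = y
  · exact Or.inl hxy
  refine Or.inr ?_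
  have hsub : rset y 0 ⊆ rset x 0 := by
    intro j hj
    simp only [rset, Finset.mem_filter, Finset.mem_univ, true_and] at hj ⊢
    have := h j
    omega
  have hcard : (rset y 0).card ≤ (rset x 0).card := Finset.card_le_card hsub
  rcases lt_or_eq_of_le hcard with hlt | hceq
  · exact Or.inl hlt
  refine Or.inr ⟨hceq.symm, ?_⟩
  -- the set of indices where rsets differ
  set D : Finset ℕ := (Finset.range (k + 1)).filter (fun i => rset x i ≠ rset y i) with hD
  have hDne : D.Nonempty := by
    obtain ⟨j, hj⟩ : ∃ j, x j ≠ y j := by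
      by_contra hc
      push_neg at hc
      exact hxy (funext hc)
    refine ⟨(y j : ℕ), Finset.mem_filter.2 ⟨Finset.mem_range.2 (y j).isLt, ?_⟩⟩
    intro heqr
    have hjy : j ∈ rset y (y j : ℕ) := by
      simp [rset]
    rw [← heqr] at hjy
    simp only [rset, Finset.mem_filter, Finset.mem_univ, true_and] at hjy
    exact hj (Fin.val_injective hjy)
  set i : ℕ := D.max' hDne with hi
  have hiD : i ∈ D := D.max'_mem hDne
  have hine : rset x i ≠ rset y i := (Finset.mem_filter.1 hiD).2
  have hforall : ∀ j : ℕ, i < j → rset x j = rset y j := by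
    intro j hj
    by_cases hjk : j ≤ k
    · by_contra hne
      have : j ∈ D := Finset.mem_filter.2 ⟨Finset.mem_range.2 (by omega), hne⟩
      exact absurd (D.le_max' j this) (not_le.2 hj)
    · rw [rset_eq_empty_of_big x (by omega), rset_eq_empty_of_big y (by omega)]
  refine ⟨i, ?_, hforall⟩
  -- symmetric difference
  set E : Finset (Fin N) := (rset x i \ rset y i) ∪ (rset y i \ rset x i) with hE
  have hEne : E.Nonempty := by
    by_contra hc
    rw [Finset.not_nonempty_iff_eq_empty] at hc
    apply hine
    apply Finset.Subset.antisymm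
    · intro a ha
      by_contra hna
      have : a ∈ E := Finset.mem_union.2 (Or.inl (Finset.mem_sdiff.2 ⟨ha, hna⟩))
      simp [hc] at this
    · intro a ha
      by_contra hna
      have : a ∈ E := Finset.mem_union.2 (Or.inr (Finset.mem_sdiff.2 ⟨ha, hna⟩))
      simp [hc] at this
  set m : Fin N := E.max' hEne with hm
  have hmE : m ∈ E := E.max'_mem hEne
  have hmY : m ∈ rset y i ∧ m ∉ rset x i := by
    rcases Finset.mem_union.1 hmE with hmem | hmem
    · exfalso
      obtain ⟨hmx, hmy⟩ := Finset.mem_sdiff.1 hmem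
      simp only [rset, Finset.mem_filter, Finset.mem_univ, true_and] at hmx hmy
      have hle : (x m : ℕ) ≤ (y m : ℕ) := h m
      have hgt : i < (y m : ℕ) := by omega
      have heqr := hforall (y m : ℕ) hgt
      have hmem1 : m ∈ rset y (y m : ℕ) := by simp [rset]
      rw [← heqr] at hmem1
      simp only [rset, Finset.mem_filter, Finset.mem_univ, true_and] at hmem1
      omega
    · obtain ⟨hmy, hmx⟩ := Finset.mem_sdiff.1 hmem
      exact ⟨hmy, hmx⟩
  refine ⟨m, hmY.1, hmY.2, ?_⟩
  rintro j (⟨hjx, hjy⟩ | ⟨hjy, hjx⟩)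
  · exact E.le_max' j (Finset.mem_union.2 (Or.inl (Finset.mem_sdiff.2 ⟨hjx, hjy⟩)))
  · exact E.le_max' j (Finset.mem_union.2 (Or.inr (Finset.mem_sdiff.2 ⟨hjy, hjx⟩)))

lemma initSeg_downset (k N m : ℕ) : isDownSet (initSeg k N m) := by
  intro y hy x hle
  simp only [initSeg, Finset.mem_filter, Finset.mem_univ, true_and] at hy ⊢
  refine le_trans (Finset.card_le_card ?_) hy
  intro z hz
  simp only [Finset.mem_filter, Finset.mem_univ, true_and] at hz ⊢
  exact ple_trans hz (ple_of_le hle)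

lemma mem_compress_iff {k n : ℕ} (s : Fin (n + 1)) (A : Finset (Fin (n + 1) → Fin (k + 1)))
    (z : Fin (n + 1) → Fin (k + 1)) :
    z ∈ compress s A ↔ (fun j => z (s.succAbove j)) ∈
      initSeg k n
        (Finset.univ.filter fun y : Fin n → Fin (k + 1) => s.insertNth (z s) y ∈ A).card := by
  simp only [compress, Finset.mem_biUnion, Finset.mem_univ, true_and, Finset.mem_image]
  constructor
  · rintro ⟨t, y, hy, rfl⟩
    simpa using hy
  · intro h
    exact ⟨z s, (fun j => z (s.succAbove j)), h, Fin.insertNth_self_removeNth s z⟩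

lemma downset_step {k n : ℕ} (hn : 1 ≤ n) {A : Finset (Fin (n + 1) → Fin (k + 1))}
    (hA : IsCompressed A) {y : Fin (n + 1) → Fin (k + 1)} (hy : y ∈ A)
    (s : Fin (n + 1)) (v : Fin (k + 1)) (hv : (v : ℕ) ≤ (y s : ℕ)) :
    Function.update y s v ∈ A := by
  -- pick another coordinate s' ≠ s
  obtain ⟨s', hs'⟩ : ∃ s' : Fin (n + 1), s' ≠ s := by
    by_cases h0 : s = ⟨0, by omega⟩
    · exact ⟨⟨1, by omega⟩, by simp [h0, Fin.ext_iff]⟩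
    · exact ⟨⟨0, by omega⟩, fun h => h0 h.symm⟩
  set x : Fin (n + 1) → Fin (k + 1) := Function.update y s v with hx
  have hxs' : x s' = y s' := Function.update_of_ne hs' v y
  have hxA : y ∈ compress s' A := (hA s').symm ▸ hy
  rw [mem_compress_iff] at hxA
  rw [← hA s', mem_compress_iff, hxs']
  refine initSeg_downset k n _ _ hxA _ ?_
  intro j
  by_cases hj : s'.succAbove j = s
  · rw [hx, hj, Function.update_self]
    exact hv
  · rw [hx, Function.update_of_ne hj]

lemma compressed_downset {k n : ℕ} (hn : 1 ≤ n) {A : Finset (Fin (n + 1) → Fin (k + 1))}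
    (hA : IsCompressed A) : isDownSet A := by
  have key : ∀ m : ℕ, ∀ y ∈ A, ∀ x : Fin (n + 1) → Fin (k + 1),
      (∀ j, (x j : ℕ) ≤ (y j : ℕ)) →
      (Finset.univ.filter fun j => x j ≠ y j).card ≤ m → x ∈ A := by
    intro m
    induction m with
    | zero =>
      intro y hy x hle hcard
      have : (Finset.univ.filter fun j => x j ≠ y j) = ∅ :=
        Finset.card_eq_zero.1 (Nat.le_zero.1 hcard)
      have hxy : x = y := by
        funext j
        by_contra hne
        have hmem : j ∈ (Finset.univ.filter fun j => x j ≠ y j) := by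
          simp [hne]
        rw [this] at hmem
        exact absurd hmem (Finset.notMem_empty j)
      exact hxy ▸ hy
    | succ m ih =>
      intro y hy x hle hcard
      by_cases hxy : x = y
      · exact hxy ▸ hy
      obtain ⟨s, hs⟩ : ∃ s, x s ≠ y s := by
        by_contra hc
        push_neg at hc
        exact hxy (funext hc)
      have hy1 : Function.update y s (x s) ∈ A := downset_step hn hA hy s (x s) (hle s)
      refine ih _ hy1 x (fun j => ?_) ?_
      · by_cases hj : j = s
        · subst hj; rw [Function.update_self]
        · rw [Function.update_of_ne hj]; exact hle j
      · have hsub : (Finset.univ.filter fun j => x j ≠ Function.update y s (x s) j) ⊆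
            (Finset.univ.filter fun j => x j ≠ y j) \ {s} := by
          intro j hj
          simp only [Finset.mem_filter, Finset.mem_univ, true_and] at hj
          by_cases hjs : j = s
          · subst hjs
            rw [Function.update_self] at hj
            exact absurd rfl hj
          · rw [Function.update_of_ne hjs] at hj
            simp [hjs, hj]
        refine le_trans (Finset.card_le_card hsub) ?_
        have hsmem : s ∈ (Finset.univ.filter fun j => x j ≠ y j) := by simp [hs]
        have hpos : 0 < (Finset.univ.filter fun j => x j ≠ y j).card :=
          Finset.card_pos.2 ⟨s, hsmem⟩
        have hcd : ((Finset.univ.filter fun j => x j ≠ y j) \ {s}).card =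
            (Finset.univ.filter fun j => x j ≠ y j).card - 1 := by
          rw [Finset.card_sdiff_of_subset (Finset.singleton_subset_iff.2 hsmem)]
          simp
        omega
  intro y hy x hle
  exact key _ y hy x hle le_rfl

end Aux

/-- **Claim 4.** Let `k ≥ 1`, `n ≥ 2` and let `A ⊆ [k]^n` be a compressed set.
Then `A` is a down-set and `d(A)` is also a down-set.
(Dimension `n ≥ 2` is rendered as `n + 1` with `n ≥ 1`.) -/
theorem claim4_downset (k n : ℕ) (hn : 1 ≤ n)
    (A : Finset (Fin (n + 1) → Fin (k + 1))) (hA : IsCompressed A) :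
    isDownSet A ∧ isDownSet (dShadow A) := by
  have hdown : isDownSet A := compressed_downset hn hA
  refine ⟨hdown, ?_⟩
  intro y hy x hle
  simp only [dShadow, Finset.mem_biUnion, Finset.mem_image, Finset.mem_filter,
    Finset.mem_univ, true_and] at hy
  obtain ⟨w, hwA, i, hwi, hupd⟩ := hy
  have hyi : (y i : ℕ) = 0 := by
    rw [← hupd]
    simp
  have hxi : x i = 0 := by
    have := hle i
    rw [hyi] at this
    exact Fin.ext (Nat.le_zero.1 this)
  set w' : Fin (n + 1) → Fin (k + 1) := Function.update x i (w i) with hw'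
  have hw'A : w' ∈ A := by
    refine hdown w hwA w' (fun j => ?_)
    by_cases hj : j = i
    · subst hj; rw [hw', Function.update_self]
    · rw [hw', Function.update_of_ne hj]
      have := hle j
      rw [← hupd, Function.update_of_ne hj] at this
      exact this
  have hw'i : w' i ≠ 0 := by
    rw [hw', Function.update_self]
    exact hwi
  simp only [dShadow, Finset.mem_biUnion, Finset.mem_image, Finset.mem_filter,
    Finset.mem_univ, true_and]
  refine ⟨w', hw'A, i, hw'i, ?_⟩
  funext j
  by_cases hj : j = i
  · subst hj
    rw [Function.update_self, hxi]
  · rw [Function.update_of_ne hj, hw', Function.update_of_ne hj]
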